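/- Let the error equation ε(μ̄, μ̄) + c(τ, τ) = ε(div(Πq̄ - q̄), τ) + c(Pu - u, τ) + ε(Πq̄ - q̄, μ̄) - ε(div μ̄, Pu - u) hold, where P is the L² projection onto W^N so that (Pu - u, τ) = 0 and (div μ̄, Pu - u) = 0. Then ‖μ̄‖₀² ≤ C( ε‖div(Πq̄ - q̄)‖₀² + ‖Πq̄ - q̄‖₀² ), with C depending only on c. -/

import Mathlib

/-- From the mixed-method error equation
`ε(μ̄,μ̄) + c(τ,τ) = ε(div(Πq̄-q̄),τ) + c(Pu-u,τ) + ε(Πq̄-q̄,μ̄) - ε(div μ̄, Pu-u)`,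
where the `L²`-projection orthogonality gives `(Pu-u,τ) = 0` and `(div μ̄, Pu-u) = 0`,
one obtains `‖μ̄‖₀² ≤ C(ε‖div(Πq̄-q̄)‖₀² + ‖Πq̄-q̄‖₀²)` for `0 < ε ≤ 1`, with `C`
depending only on `c`.  Here `d := div(Πq̄-q̄) ∈ W`, `e := Πq̄-q̄ ∈ Vh`, `r := Pu - u`,
`dm := div μ̄`. -/
theorem mixed_method_error_bound
    (W Vh : Type*) [NormedAddCommGroup W] [InnerProductSpace ℝ W]
    [NormedAddCommGroup Vh] [InnerProductSpace ℝ Vh] :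
    ∀ c : ℝ, 0 < c → ∃ C : ℝ, 0 < C ∧
      ∀ (ε : ℝ) (mu e : Vh) (tau d r dm : W), 0 < ε → ε ≤ 1 →
        (inner ℝ r tau : ℝ) = 0 → (inner ℝ dm r : ℝ) = 0 →
        ε * (inner ℝ mu mu : ℝ) + c * (inner ℝ tau tau : ℝ) =
          ε * (inner ℝ d tau : ℝ) + c * (inner ℝ r tau : ℝ) +
            ε * (inner ℝ e mu : ℝ) - ε * (inner ℝ dm r : ℝ) →
        ‖mu‖ ^ 2 ≤ C * (ε * ‖d‖ ^ 2 + ‖e‖ ^ 2) := by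
  intro c hc
  refine ⟨1/c + 1, by positivity, ?_⟩
  intro ε mu e tau d r dm hε hε1 hr hdm heq
  rw [hr, hdm] at heq
  have hmu : (inner ℝ mu mu : ℝ) = ‖mu‖ ^ 2 := real_inner_self_eq_norm_sq mu
  have htau : (inner ℝ tau tau : ℝ) = ‖tau‖ ^ 2 := real_inner_self_eq_norm_sq tau
  have h1 : (inner ℝ d tau : ℝ) ≤ ‖d‖ * ‖tau‖ := real_inner_le_norm d tau
  have h2 : (inner ℝ e mu : ℝ) ≤ ‖e‖ * ‖mu‖ := real_inner_le_norm e mu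
  rw [hmu, htau] at heq
  -- from heq: ε‖mu‖² + c‖tau‖² ≤ ε‖d‖‖tau‖ + ε‖e‖‖mu‖
  have key : ε * ‖mu‖ ^ 2 + c * ‖tau‖ ^ 2 ≤ ε * (‖d‖ * ‖tau‖) + ε * (‖e‖ * ‖mu‖) := by
    nlinarith [hε.le]
  have h3 : ε * (‖d‖ * ‖tau‖) ≤ ε ^ 2 * ‖d‖ ^ 2 / (2 * c) + c * ‖tau‖ ^ 2 / 2 := by
    have := sq_nonneg (ε * ‖d‖ - c * ‖tau‖)
    have hc2 : (0:ℝ) < 2 * c := by linarith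
    rw [div_add_div _ _ (ne_of_gt hc2) (by norm_num : (2:ℝ) ≠ 0), le_div_iff₀ (by positivity)]
    nlinarith
  have h4 : ε * (‖e‖ * ‖mu‖) ≤ ε * ‖e‖ ^ 2 / 2 + ε * ‖mu‖ ^ 2 / 2 := by
    nlinarith [sq_nonneg (‖e‖ - ‖mu‖), hε.le]
  have htau0 : 0 ≤ c * ‖tau‖ ^ 2 := mul_nonneg hc.le (sq_nonneg _)
  have h5 : ε * ‖mu‖ ^ 2 / 2 ≤ ε ^ 2 * ‖d‖ ^ 2 / (2 * c) + ε * ‖e‖ ^ 2 / 2 := by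
    linarith
  have h6' : ε * ‖mu‖ ^ 2 ≤ ε * (ε * ‖d‖ ^ 2 / c + ‖e‖ ^ 2) := by
    have hexp : ε * (ε * ‖d‖ ^ 2 / c + ‖e‖ ^ 2)
        = 2 * (ε ^ 2 * ‖d‖ ^ 2 / (2 * c) + ε * ‖e‖ ^ 2 / 2) := by
      field_simp
    linarith
  have h6 : ‖mu‖ ^ 2 ≤ ε * ‖d‖ ^ 2 / c + ‖e‖ ^ 2 := le_of_mul_le_mul_left h6' hε
  have hC : ε * ‖d‖ ^ 2 / c = (1 / c) * (ε * ‖d‖ ^ 2) := by ring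
  nlinarith [mul_nonneg hε.le (sq_nonneg ‖d‖), sq_nonneg ‖e‖,
    mul_nonneg (le_of_lt (one_div_pos.mpr hc)) (sq_nonneg ‖e‖)]
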